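/- (Completeness, Kalmár) Every tautology is derivable in NPC from the empty hypothesis list: if g(A) = 1 for every Boolean valuation g, then ⊢ A. -/

import Mathlib

/-- Propositional formulas over a type `V` of atoms, built from atoms by
conjunction and negation. -/
inductive Formula (V : Type*) : Type _
  | atom : V → Formula V
  | conj : Formula V → Formula V → Formula V
  | neg  : Formula V → Formula V

/-- Natural propositional calculus (NPC) derivability `Γ ⊢ A`. -/
inductive NPC {V : Type*} : List (Formula V) → Formula V → Prop
  | ax (C : Formula V) : NPC [C] C
  | andElimLeft {Γ : List (Formula V)} {A B : Formula V} :
      NPC Γ (Formula.conj A B) → NPC Γ A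
  | andElimRight {Γ : List (Formula V)} {A B : Formula V} :
      NPC Γ (Formula.conj A B) → NPC Γ B
  | andIntro {Γ₁ Γ₂ : List (Formula V)} {A B : Formula V} :
      NPC Γ₁ A → NPC Γ₂ B → NPC (Γ₁ ++ Γ₂) (Formula.conj A B)
  | negElim {Γ : List (Formula V)} {C : Formula V} :
      NPC Γ (Formula.neg (Formula.neg C)) → NPC Γ C
  | negIntro {Γ₁ Γ₂ : List (Formula V)} {A C : Formula V} :
      NPC (Γ₁ ++ [C]) A → NPC (Γ₂ ++ [C]) (Formula.neg A) →
      NPC (Γ₁ ++ Γ₂) (Formula.neg C)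

/-- A Boolean valuation: a `{0,1}`-valued function on formulas respecting
negation and conjunction. -/
structure BooleanValuation (V : Type*) where
  g : Formula V → ℕ
  range01 : ∀ A, g A = 0 ∨ g A = 1
  neg_eq : ∀ A, g (Formula.neg A) = 1 - g A
  conj_eq : ∀ A B, g (Formula.conj A B) = g A * g B

section NPCAux

variable {V : Type*}

theorem npc_weakenEnd {Γ : List (Formula V)} {A : Formula V} (h : NPC Γ A) (C : Formula V) :
    NPC (Γ ++ [C]) A :=
  (NPC.andIntro h (NPC.ax C)).andElimLeft

theorem npc_dnIntro {Γ : List (Formula V)} {A : Formula V} (h : NPC Γ A) :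
    NPC Γ (Formula.neg (Formula.neg A)) := by
  have h2 : NPC (([] : List (Formula V)) ++ [Formula.neg A]) (Formula.neg A) := NPC.ax _
  have h3 := NPC.negIntro (Γ₁ := Γ) (Γ₂ := []) (npc_weakenEnd h (Formula.neg A)) h2
  simpa using h3

theorem npc_cutHead {Δ : List (Formula V)} {C A : Formula V}
    (h₁ : NPC Δ C) (h₂ : NPC [C] A) : NPC Δ A := by
  have u1 : NPC (([] : List (Formula V)) ++ [Formula.neg A]) (Formula.neg C) :=
    NPC.negIntro (Γ₁ := []) (Γ₂ := [Formula.neg A]) h₂ (npc_weakenEnd (NPC.ax _) C)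
  have u3 := NPC.negIntro (Γ₁ := Δ) (Γ₂ := []) (npc_weakenEnd h₁ (Formula.neg A)) u1
  rw [List.append_nil] at u3
  exact u3.negElim

theorem npc_contractPair {X A : Formula V} (h : NPC [X, X] A) : NPC [X] A := by
  have da : NPC ([X] ++ [X]) (Formula.neg (Formula.neg A)) := npc_dnIntro h
  have a : NPC ([Formula.neg A] ++ [X]) (Formula.neg A) := npc_weakenEnd (NPC.ax _) X
  have db : NPC ([Formula.neg A] ++ [X]) (Formula.neg X) :=
    NPC.negIntro (Γ₁ := [Formula.neg A]) (Γ₂ := [X]) a da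
  have dc : NPC ([Formula.neg A] ++ ([] : List (Formula V))) (Formula.neg X) :=
    NPC.negIntro (Γ₁ := [Formula.neg A]) (Γ₂ := []) db (npc_dnIntro (NPC.ax X))
  have dd : NPC (([] : List (Formula V)) ++ [X]) (Formula.neg (Formula.neg A)) :=
    NPC.negIntro (Γ₁ := []) (Γ₂ := [X]) dc (npc_weakenEnd (npc_dnIntro (NPC.ax X)) (Formula.neg A))
  exact dd.negElim

theorem npc_conjSingle {X B C : Formula V} (h₁ : NPC [X] B) (h₂ : NPC [X] C) :
    NPC [X] (Formula.conj B C) :=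
  npc_contractPair (NPC.andIntro h₁ h₂)

/-- Boolean evaluation of formulas. -/
def fEval (v : V → Bool) : Formula V → Bool
  | .atom p => v p
  | .conj B C => fEval v B && fEval v C
  | .neg B => !fEval v B

/-- The list of atoms occurring in a formula. -/
def atomsOf : Formula V → List V
  | .atom p => [p]
  | .conj B C => atomsOf B ++ atomsOf C
  | .neg B => atomsOf B

theorem atomsOf_ne_nil : ∀ B : Formula V, atomsOf B ≠ []
  | .atom _ => by simp [atomsOf]
  | .conj B C => by simp [atomsOf, atomsOf_ne_nil B]
  | .neg B => atomsOf_ne_nil B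

/-- The literal corresponding to an atom under a valuation. -/
def fLit (v : V → Bool) (p : V) : Formula V :=
  if v p then Formula.atom p else Formula.neg (Formula.atom p)

/-- Conjunction of the literals of the atoms `p :: l`. -/
def ConjL (v : V → Bool) (p : V) : List V → Formula V
  | [] => fLit v p
  | q :: rest => Formula.conj (fLit v p) (ConjL v q rest)

/-- `B` if `B` evaluates to true, else `¬B`. -/
def fPolar (v : V → Bool) (B : Formula V) : Formula V :=
  if fEval v B then B else Formula.neg B

theorem ConjL_congr (v w : V → Bool) : ∀ (l : List V) (p : V),
    (∀ x ∈ p :: l, v x = w x) → ConjL v p l = ConjL w p l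
  | [], p, h => by simp [ConjL, fLit, h p (by simp)]
  | r :: rest, p, h => by
      simp only [ConjL]
      rw [ConjL_congr v w rest r (fun x hx => h x (List.mem_cons_of_mem _ hx))]
      simp [fLit, h p (by simp)]

theorem npc_extract (v : V → Bool) :
    ∀ (l : List V) (p : V) (P : Formula V), NPC [P] (ConjL v p l) →
      ∀ q ∈ p :: l, NPC [P] (fLit v q)
  | [], p, P, h, q, hq => by
      rcases List.mem_singleton.mp hq with rfl
      exact h
  | r :: rest, p, P, h, q, hq => by
      have h' : NPC [P] (Formula.conj (fLit v p) (ConjL v r rest)) := h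
      rcases List.mem_cons.mp hq with rfl | hq'
      · exact h'.andElimLeft
      · exact npc_extract v rest r P h'.andElimRight q hq'

theorem npc_kalmarBase (v : V → Bool) (p : V) (l : List V) :
    ∀ B : Formula V, (∀ q ∈ atomsOf B, q ∈ p :: l) →
      NPC [ConjL v p l] (fPolar v B) := by
  intro B
  induction B with
  | atom q =>
      intro hq
      have h1 : NPC [ConjL v p l] (fLit v q) :=
        npc_extract v l p _ (NPC.ax _) q (hq q (by simp [atomsOf]))
      cases hv : v q <;> simpa [fPolar, fEval, fLit, hv] using h1
  | conj B C ihB ihC =>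
      intro hq
      have hB := ihB (fun q h' => hq q (by simp [atomsOf, h']))
      have hC := ihC (fun q h' => hq q (by simp [atomsOf, h']))
      cases hb : fEval v B with
      | false =>
          rw [fPolar, if_neg (by simp [fEval, hb])]
          rw [fPolar, if_neg (by simp [hb])] at hB
          have P1 : NPC (([] : List (Formula V)) ++ [Formula.conj B C]) B :=
            (NPC.ax _).andElimLeft
          have P2 : NPC ([ConjL v p l] ++ [Formula.conj B C]) (Formula.neg B) :=
            npc_weakenEnd hB _
          exact NPC.negIntro (Γ₁ := []) (Γ₂ := [ConjL v p l]) P1 P2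
      | true =>
          cases hc : fEval v C with
          | false =>
              rw [fPolar, if_neg (by simp [fEval, hb, hc])]
              rw [fPolar, if_neg (by simp [hc])] at hC
              have P1 : NPC (([] : List (Formula V)) ++ [Formula.conj B C]) C :=
                (NPC.ax _).andElimRight
              have P2 : NPC ([ConjL v p l] ++ [Formula.conj B C]) (Formula.neg C) :=
                npc_weakenEnd hC _
              exact NPC.negIntro (Γ₁ := []) (Γ₂ := [ConjL v p l]) P1 P2
          | true =>
              rw [fPolar, if_pos (by simp [fEval, hb, hc])]
              rw [fPolar, if_pos (by simp [hb])] at hB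
              rw [fPolar, if_pos (by simp [hc])] at hC
              exact npc_conjSingle hB hC
  | neg B ih =>
      intro hq
      have hB := ih (fun q h' => hq q h')
      cases hb : fEval v B with
      | true =>
          rw [fPolar, if_neg (by simp [fEval, hb])]
          rw [fPolar, if_pos (by simp [hb])] at hB
          exact npc_dnIntro hB
      | false =>
          rw [fPolar, if_pos (by simp [fEval, hb])]
          rw [fPolar, if_neg (by simp [hb])] at hB
          exact hB

theorem npc_elimAtoms (A : Formula V) (l : List V) : ∀ (p : V), (p :: l).Nodup →
    (∀ v : V → Bool, NPC [ConjL v p l] A) → NPC [] A := by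
  induction l with
  | nil =>
      intro p _ H
      have hT : NPC [Formula.atom p] A := by
        have := H (fun _ => true)
        simpa [ConjL, fLit] using this
      have hF : NPC [Formula.neg (Formula.atom p)] A := by
        have := H (fun _ => false)
        simpa [ConjL, fLit] using this
      have n1 : NPC (([] : List (Formula V)) ++ [Formula.neg A]) (Formula.neg (Formula.atom p)) :=
        NPC.negIntro (Γ₁ := []) (Γ₂ := [Formula.neg A]) hT (npc_weakenEnd (NPC.ax _) _)
      have n2 : NPC (([] : List (Formula V)) ++ [Formula.neg A])
          (Formula.neg (Formula.neg (Formula.atom p))) :=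
        NPC.negIntro (Γ₁ := []) (Γ₂ := [Formula.neg A]) hF (npc_weakenEnd (NPC.ax _) _)
      have n3 := NPC.negIntro (Γ₁ := ([] : List (Formula V))) (Γ₂ := []) n1 n2
      exact n3.negElim
  | cons q rest ih =>
      intro p hnd H
      apply ih q (List.nodup_cons.mp hnd).2
      intro v
      classical
      set Q := ConjL v q rest with hQdef
      have hpq : p ∉ q :: rest := (List.nodup_cons.mp hnd).1
      set v₁ : V → Bool := fun x => if x = p then true else v x with hv₁def
      set v₀ : V → Bool := fun x => if x = p then false else v x with hv₀def
      have hv₁ : ∀ x ∈ q :: rest, v₁ x = v x := by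
        intro x hx
        simp only [hv₁def]
        rw [if_neg (by rintro rfl; exact hpq hx)]
      have hv₀ : ∀ x ∈ q :: rest, v₀ x = v x := by
        intro x hx
        simp only [hv₀def]
        rw [if_neg (by rintro rfl; exact hpq hx)]
      have h1 : NPC [Formula.conj (Formula.atom p) Q] A := by
        have hH := H v₁
        have heq : ConjL v₁ p (q :: rest) = Formula.conj (Formula.atom p) Q := by
          show Formula.conj (fLit v₁ p) (ConjL v₁ q rest) = _
          rw [ConjL_congr v₁ v rest q hv₁]
          simp [fLit, hv₁def]
          rfl
        rwa [heq] at hH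
      have h0 : NPC [Formula.conj (Formula.neg (Formula.atom p)) Q] A := by
        have hH := H v₀
        have heq : ConjL v₀ p (q :: rest) = Formula.conj (Formula.neg (Formula.atom p)) Q := by
          show Formula.conj (fLit v₀ p) (ConjL v₀ q rest) = _
          rw [ConjL_congr v₀ v rest q hv₀]
          simp [fLit, hv₀def]
          rfl
        rwa [heq] at hH
      -- s1 : Q, atom p ⊢ A
      have c1 : NPC ([Q] ++ [Formula.atom p]) (Formula.conj Q (Formula.atom p)) :=
        NPC.andIntro (NPC.ax Q) (NPC.ax _)
      have c2 : NPC [Formula.conj Q (Formula.atom p)] (Formula.conj (Formula.atom p) Q) :=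
        npc_conjSingle (NPC.ax _).andElimRight (NPC.ax _).andElimLeft
      have s1 : NPC ([Q] ++ [Formula.atom p]) A := npc_cutHead (npc_cutHead c1 c2) h1
      have c1' : NPC ([Q] ++ [Formula.neg (Formula.atom p)])
          (Formula.conj Q (Formula.neg (Formula.atom p))) :=
        NPC.andIntro (NPC.ax Q) (NPC.ax _)
      have c2' : NPC [Formula.conj Q (Formula.neg (Formula.atom p))]
          (Formula.conj (Formula.neg (Formula.atom p)) Q) :=
        npc_conjSingle (NPC.ax _).andElimRight (NPC.ax _).andElimLeft
      have s2 : NPC ([Q] ++ [Formula.neg (Formula.atom p)]) A :=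
        npc_cutHead (npc_cutHead c1' c2') h0
      have e1 : NPC ([Q] ++ [Formula.neg A]) (Formula.neg (Formula.atom p)) :=
        NPC.negIntro (Γ₁ := [Q]) (Γ₂ := [Formula.neg A]) s1 (npc_weakenEnd (NPC.ax _) _)
      have e2 : NPC ([Q] ++ [Formula.neg A]) (Formula.neg (Formula.neg (Formula.atom p))) :=
        NPC.negIntro (Γ₁ := [Q]) (Γ₂ := [Formula.neg A]) s2 (npc_weakenEnd (NPC.ax _) _)
      have fin : NPC ([Q] ++ [Q]) (Formula.neg (Formula.neg A)) :=
        NPC.negIntro (Γ₁ := [Q]) (Γ₂ := [Q]) e1 e2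
      exact npc_contractPair fin.negElim

theorem npc_eval_of_taut {A : Formula V} (h : ∀ g : BooleanValuation V, g.g A = 1)
    (v : V → Bool) : fEval v A = true := by
  let g : BooleanValuation V :=
    { g := fun B => if fEval v B then 1 else 0
      range01 := by intro B; by_cases h' : fEval v B <;> simp [h']
      neg_eq := by intro B; cases h' : fEval v B <;> simp [fEval, h']
      conj_eq := by
        intro B C
        cases h' : fEval v B <;> cases h'' : fEval v C <;> simp [fEval, h', h''] }
  have hg := h g
  cases h' : fEval v A with
  | true => rfl
  | false => simp [g, h'] at hg

end NPCAux

/-- Th. 2 (completeness, Kalmár): every tautology is derivable in NPC from the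
empty hypothesis list. -/
theorem kalmar_completeness {V : Type*} (A : Formula V)
    (h : ∀ g : BooleanValuation V, g.g A = 1) :
    NPC ([] : List (Formula V)) A := by
  classical
  obtain ⟨p, l, hpl⟩ : ∃ p l, (atomsOf A).dedup = p :: l := by
    cases hd : (atomsOf A).dedup with
    | nil =>
        rw [List.dedup_eq_nil] at hd
        exact absurd hd (atomsOf_ne_nil A)
    | cons p l => exact ⟨p, l, rfl⟩
  apply npc_elimAtoms A l p (hpl ▸ (atomsOf A).nodup_dedup)
  intro v
  have hb := npc_kalmarBase v p l A (fun q hq => hpl ▸ List.mem_dedup.mpr hq)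
  have he : fEval v A = true := npc_eval_of_taut h v
  simpa [fPolar, he] using hb
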